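/- For every prime p, the mean value M(c*(·,p) c*(·,p²)) of the function n ↦ c*(n,p) c*(n,p²) exists and equals p − 1; in particular there exist distinct positive integers r ≠ s with M(c*(·,r) c*(·,s)) ≠ 0, so the orthogonality relations fail for the unitary Ramanujan sums. -/

import Mathlib

open Finset Filter Topology

/-- The unitary gcd `(n,r)_U`: the largest `d` with `d ∣ n`, `d ∣ r` and `gcd(d, r/d) = 1`. -/
def unitaryGcd (n r : ℕ) : ℕ :=
  (r.divisors.filter (fun d => d ∣ n ∧ Nat.Coprime d (r / d))).sup id

/-- The unitary Ramanujan sum `c*(n,r) = ∑_{1 ≤ k ≤ r, (k,r)_U = 1} exp(2πikn/r)`. -/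
noncomputable def unitaryRamanujanSum (n r : ℕ) : ℂ :=
  ∑ k ∈ (Finset.Icc 1 r).filter (fun k => unitaryGcd k r = 1),
    Complex.exp (2 * Real.pi * Complex.I * k * n / r)

lemma uG_prime {p : ℕ} (hp : p.Prime) (k : ℕ) : unitaryGcd k p = 1 ↔ ¬ p ∣ k := by
  have h2 := hp.two_le
  unfold unitaryGcd
  rw [hp.divisors, Finset.filter_insert, Finset.filter_singleton,
    if_pos ⟨one_dvd _, Nat.coprime_one_left _⟩]
  by_cases h : p ∣ k
  · rw [if_pos ⟨h, by rw [Nat.div_self hp.pos]; exact Nat.coprime_one_right _⟩]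
    simp only [Finset.sup_insert, Finset.sup_singleton, id_eq, h, not_true_eq_false, iff_false]
    have : (1:ℕ) ⊔ p = p := sup_eq_right.mpr (by omega)
    omega
  · rw [if_neg (fun hc => h hc.1)]
    simp [h]

lemma divisors_sq {p : ℕ} (hp : p.Prime) : (p^2).divisors = {1, p, p^2} := by
  ext d
  simp only [Nat.mem_divisors, Nat.dvd_prime_pow hp, Finset.mem_insert, Finset.mem_singleton]
  constructor
  · rintro ⟨⟨i, hi, rfl⟩, -⟩
    interval_cases i <;> simp
  · have : p^2 ≠ 0 := pow_ne_zero _ hp.pos.ne'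
    rintro (rfl | rfl | rfl)
    · exact ⟨⟨0, by omega, by simp⟩, this⟩
    · exact ⟨⟨1, by omega, by simp⟩, this⟩
    · exact ⟨⟨2, by omega, rfl⟩, this⟩

lemma uG_sq {p : ℕ} (hp : p.Prime) (k : ℕ) : unitaryGcd k (p^2) = 1 ↔ ¬ p^2 ∣ k := by
  have h2 := hp.two_le
  unfold unitaryGcd
  have hps : p^2 / p = p := by rw [pow_two, Nat.mul_div_cancel_left _ hp.pos]
  have hcp : ¬ (p ∣ k ∧ Nat.Coprime p (p^2 / p)) := by
    rintro ⟨-, hc⟩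
    rw [hps] at hc
    exact hp.ne_one ((Nat.coprime_self _).mp hc)
  rw [divisors_sq hp,
    show ({1, p, p^2} : Finset ℕ) = insert 1 (insert p {p^2}) from rfl,
    Finset.filter_insert, Finset.filter_insert, Finset.filter_singleton,
    if_pos ⟨one_dvd _, Nat.coprime_one_left _⟩, if_neg hcp]
  by_cases h : p^2 ∣ k
  · rw [if_pos ⟨h, by rw [Nat.div_self (pow_pos hp.pos 2)]; exact Nat.coprime_one_right _⟩]
    simp only [Finset.sup_insert, Finset.sup_singleton, id_eq, h, not_true_eq_false, iff_false]
    have hle : (1:ℕ) ⊔ p^2 = p^2 := sup_eq_right.mpr (by nlinarith)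
    have : 2 ≤ p^2 := by nlinarith
    omega
  · rw [if_neg (fun hc => h hc.1)]
    simp [h]

lemma exp_term (n r k : ℕ) :
    Complex.exp (2 * Real.pi * Complex.I * k * n / r)
      = Complex.exp (2 * Real.pi * Complex.I * n / r) ^ k := by
  rw [← Complex.exp_nat_mul]
  ring_nf

lemma zeta_pow_r {n r : ℕ} (hr : 0 < r) :
    Complex.exp (2 * Real.pi * Complex.I * n / r) ^ r = 1 := by
  rw [← Complex.exp_nat_mul]
  have hrc : (r : ℂ) ≠ 0 := Nat.cast_ne_zero.mpr hr.ne'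
  have : (r : ℂ) * (2 * Real.pi * Complex.I * n / r) = n * (2 * Real.pi * Complex.I) := by
    field_simp
  rw [this, Complex.exp_nat_mul_two_pi_mul_I]

lemma zeta_eq_one_iff {n r : ℕ} (hr : 0 < r) :
    Complex.exp (2 * Real.pi * Complex.I * n / r) = 1 ↔ r ∣ n := by
  rw [Complex.exp_eq_one_iff]
  have hrc : (r : ℂ) ≠ 0 := Nat.cast_ne_zero.mpr hr.ne'
  constructor
  · rintro ⟨m, hm⟩
    have hpi : (2 * Real.pi * Complex.I) ≠ 0 := by
      simp [Real.pi_ne_zero, Complex.I_ne_zero, Complex.ext_iff, Real.pi_pos.ne']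
    have hc : (n : ℂ) = m * r := by
      field_simp at hm
      have h1 : (2 * (Real.pi:ℂ) * Complex.I) * n = (2 * (Real.pi:ℂ) * Complex.I) * (m * r) := by
        linear_combination (2 * (Real.pi:ℂ) * Complex.I) * hm
      exact mul_left_cancel₀ hpi h1
    have hz : (n : ℤ) = m * r := by exact_mod_cast hc
    exact Int.natCast_dvd_natCast.mp ⟨m, by rw [hz, mul_comm]⟩
  · rintro ⟨m, rfl⟩
    exact ⟨m, by field_simp; push_cast; ring⟩

lemma sum_exp {n r : ℕ} (hr : 0 < r) :
    ∑ k ∈ Finset.Icc 1 r, Complex.exp (2 * Real.pi * Complex.I * k * n / r)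
      = if r ∣ n then (r : ℂ) else 0 := by
  simp only [exp_term]
  set ζ := Complex.exp (2 * Real.pi * Complex.I * n / r) with hζ
  by_cases h : r ∣ n
  · have h1 : ζ = 1 := (zeta_eq_one_iff hr).mpr h
    rw [if_pos h]
    simp [h1]
  · rw [if_neg h]
    have hne : ζ ≠ 1 := fun hc => h ((zeta_eq_one_iff hr).mp hc)
    have : Finset.Icc 1 r = Finset.Ico 1 (r+1) := by rw [Finset.Ico_add_one_right_eq_Icc]
    rw [this, Finset.sum_Ico_eq_sum_range]
    simp only [add_tsub_cancel_right]
    have : ∑ i ∈ Finset.range r, ζ ^ (1 + i) = ζ * ∑ i ∈ Finset.range r, ζ ^ i := by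
      rw [Finset.mul_sum]
      exact Finset.sum_congr rfl fun i _ => by rw [pow_add, pow_one]
    rw [this, geom_sum_eq hne, zeta_pow_r hr]
    simp

lemma uRS_eq {r : ℕ} (hr : 0 < r) (hiff : ∀ k, unitaryGcd k r = 1 ↔ ¬ r ∣ k) (n : ℕ) :
    unitaryRamanujanSum n r = (if r ∣ n then (r : ℂ) else 0) - 1 := by
  unfold unitaryRamanujanSum
  have hfil : (Finset.Icc 1 r).filter (fun k => unitaryGcd k r = 1)
      = (Finset.Icc 1 r).erase r := by
    rw [← Finset.filter_ne']
    apply Finset.filter_congr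
    intro k hk
    simp only [Finset.mem_Icc] at hk
    rw [hiff k]
    constructor
    · intro hnd; rintro rfl; exact hnd dvd_rfl
    · intro hne hdvd
      exact hne (Nat.le_antisymm hk.2 (Nat.le_of_dvd (by omega) hdvd))
  rw [hfil, Finset.sum_erase_eq_sub (Finset.mem_Icc.mpr ⟨hr, le_rfl⟩), sum_exp hr,
    exp_term n r r, zeta_pow_r hr]

lemma count_dvd (d N : ℕ) :
    ∑ n ∈ Finset.Icc 1 N, (if d ∣ n then (1:ℂ) else 0) = ((N / d : ℕ) : ℂ) := by
  rw [Finset.sum_boole, show Finset.Icc 1 N = Finset.Ioc 0 N from by rw [← Finset.Icc_add_one_left_eq_Ioc, zero_add],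
    Nat.Ioc_filter_dvd_card_eq_div]

lemma sum_product (p : ℕ) (hp : p.Prime) (N : ℕ) :
    ∑ n ∈ Finset.Icc 1 N, unitaryRamanujanSum n p * unitaryRamanujanSum n (p^2)
      = (N : ℂ) - p * ((N / p : ℕ) : ℂ) + ((p:ℂ)^3 - (p:ℂ)^2) * ((N / p^2 : ℕ) : ℂ) := by
  have key : ∀ n ∈ Finset.Icc 1 N,
      unitaryRamanujanSum n p * unitaryRamanujanSum n (p^2)
        = (1:ℂ) - p * (if p ∣ n then (1:ℂ) else 0)
            + ((p:ℂ)^3 - (p:ℂ)^2) * (if p^2 ∣ n then (1:ℂ) else 0) := by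
    intro n _
    rw [uRS_eq hp.pos (uG_prime hp), uRS_eq (pow_pos hp.pos 2) (uG_sq hp)]
    by_cases h2 : p^2 ∣ n
    · have h1 : p ∣ n := dvd_trans (dvd_pow_self p two_ne_zero) h2
      simp only [h1, h2, if_pos]
      push_cast
      ring
    · by_cases h1 : p ∣ n <;> simp [h1, h2] <;> ring
  rw [Finset.sum_congr rfl key]
  rw [Finset.sum_add_distrib, Finset.sum_sub_distrib, ← Finset.mul_sum, ← Finset.mul_sum,
    count_dvd, count_dvd, Finset.sum_const, Nat.card_Icc]
  simp

lemma hgen {c : ℝ} (hc : 0 < c) :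
    Tendsto (fun x : ℝ => (⌊x / c⌋₊ : ℝ) / x) atTop (𝓝 (1 / c)) := by
  have hcomp : Tendsto (fun x : ℝ => (⌊x / c⌋₊ : ℝ) / (x / c)) atTop (𝓝 1) :=
    tendsto_nat_floor_div_atTop.comp (tendsto_id.atTop_div_const hc)
  have h := hcomp.mul_const (1 / c)
  rw [one_mul] at h
  apply h.congr'
  filter_upwards [eventually_gt_atTop (0:ℝ)] with x hx
  field_simp

lemma real_limit (p : ℕ) (hp : p.Prime) :
    Tendsto (fun x : ℝ =>
      ((⌊x⌋₊ : ℝ) - p * ((⌊x⌋₊ / p : ℕ) : ℝ)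
        + ((p:ℝ)^3 - (p:ℝ)^2) * ((⌊x⌋₊ / p^2 : ℕ) : ℝ)) / x)
      atTop (𝓝 ((p : ℝ) - 1)) := by
  have hp0 : (0:ℝ) < p := by exact_mod_cast hp.pos
  have hp2 : (0:ℝ) < (p:ℝ)^2 := by positivity
  have h1 : Tendsto (fun x : ℝ => (⌊x⌋₊ : ℝ) / x) atTop (𝓝 1) := tendsto_nat_floor_div_atTop
  have h2 := (hgen hp0).const_mul (p:ℝ)
  have h3 := (hgen hp2).const_mul ((p:ℝ)^3 - (p:ℝ)^2)
  have hall := (h1.sub h2).add h3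
  have hval : (1:ℝ) - (p:ℝ) * (1/p) + ((p:ℝ)^3 - (p:ℝ)^2) * (1/(p:ℝ)^2) = (p:ℝ) - 1 := by
    field_simp
    ring
  rw [hval] at hall
  apply hall.congr
  intro x
  have e1 : ((⌊x⌋₊ / p : ℕ) : ℝ) = (⌊x / (p:ℝ)⌋₊ : ℝ) := by
    rw [Nat.floor_div_natCast]
  have e2 : ((⌊x⌋₊ / p^2 : ℕ) : ℝ) = (⌊x / ((p:ℝ)^2)⌋₊ : ℝ) := by
    rw [show ((p:ℝ)^2) = ((p^2 : ℕ) : ℝ) by push_cast; ring, Nat.floor_div_natCast]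
  rw [e1, e2]
  ring


/-- For every prime `p`, the mean value of `n ↦ c*(n,p) c*(n,p²)` exists and equals `p − 1`;
in particular there exist distinct positive integers `r ≠ s` whose unitary Ramanujan sums
are not orthogonal in mean. -/
theorem unitaryRamanujanSum_orthogonality_fails (p : ℕ) (hp : p.Prime) :
    Tendsto
      (fun x : ℝ =>
        (∑ n ∈ Finset.Icc 1 ⌊x⌋₊,
          unitaryRamanujanSum n p * unitaryRamanujanSum n (p ^ 2)) / (x : ℂ))
      atTop (𝓝 ((p : ℂ) - 1)) ∧
    ∃ r s : ℕ, 0 < r ∧ 0 < s ∧ r ≠ s ∧ ∃ L : ℂ, L ≠ 0 ∧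
      Tendsto
        (fun x : ℝ =>
          (∑ n ∈ Finset.Icc 1 ⌊x⌋₊,
            unitaryRamanujanSum n r * unitaryRamanujanSum n s) / (x : ℂ))
        atTop (𝓝 L) := by
  have htd : Tendsto
      (fun x : ℝ =>
        (∑ n ∈ Finset.Icc 1 ⌊x⌋₊,
          unitaryRamanujanSum n p * unitaryRamanujanSum n (p ^ 2)) / (x : ℂ))
      atTop (𝓝 ((p : ℂ) - 1)) := by
    have heq : ∀ x : ℝ,
        (((((⌊x⌋₊ : ℝ) - p * ((⌊x⌋₊ / p : ℕ) : ℝ)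
          + ((p:ℝ)^3 - (p:ℝ)^2) * ((⌊x⌋₊ / p^2 : ℕ) : ℝ)) / x : ℝ)) : ℂ)
          = (∑ n ∈ Finset.Icc 1 ⌊x⌋₊,
            unitaryRamanujanSum n p * unitaryRamanujanSum n (p ^ 2)) / (x : ℂ) := by
      intro x
      rw [sum_product p hp]
      push_cast
      ring
    have := (Complex.continuous_ofReal.tendsto _).comp (real_limit p hp)
    simp only [Function.comp_def] at this
    have h2 : ((((p:ℝ) - 1 : ℝ)) : ℂ) = (p : ℂ) - 1 := by push_cast; ring
    rw [h2] at this
    exact this.congr heq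
  refine ⟨htd, p, p^2, hp.pos, pow_pos hp.pos 2, ?_, (p:ℂ) - 1, ?_, htd⟩
  · have := hp.two_le; nlinarith
  · intro hc
    have : (p:ℂ) = 1 := by linear_combination hc
    exact hp.ne_one (by exact_mod_cast this)
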